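/- arXiv:2503.21443 — 3 statements merged into one kernel-verified Lean document; each statement's English description precedes it below -/
import Mathlib

section
/- Let D be a symmetric positive definite p×p real matrix, A an N×p real matrix whose i-th row is nonzero, σ² > 0, and w = Aᵀ e_i. Then tr(A D^{-1} Aᵀ) - tr(A (D + (1/σ²) w wᵀ)^{-1} Aᵀ) > 0. In words: adding a rank-one observation strictly decreases the trace of the posterior predictive covariance. -/
open Matrix

private lemma mul_vecMulVec' {m p n : ℕ} (M : Matrix (Fin m) (Fin p) ℝ) (a : Fin p → ℝ) (b : Fin n → ℝ) :
    M * vecMulVec a b = vecMulVec (M *ᵥ a) b := by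
  ext i j
  simp [mul_apply, vecMulVec_apply, mulVec, dotProduct, Finset.sum_mul, mul_assoc]

private lemma vecMulVec_mul' {m p n : ℕ} (a : Fin m → ℝ) (b : Fin p → ℝ) (M : Matrix (Fin p) (Fin n) ℝ) :
    vecMulVec a b * M = vecMulVec a (Mᵀ *ᵥ b) := by
  ext i j
  simp [mul_apply, vecMulVec_apply, mulVec, dotProduct, Finset.mul_sum, transpose_apply]
  exact Finset.sum_congr rfl fun x _ => by ring

private lemma sandwich' {p : ℕ} (w : Fin p → ℝ) (B : Matrix (Fin p) (Fin p) ℝ) :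
    vecMulVec w w * B * vecMulVec w w = (w ⬝ᵥ B *ᵥ w) • vecMulVec w w := by
  rw [mul_vecMulVec', vecMulVec_mul']
  ext i j
  simp [vecMulVec_apply, mulVec, dotProduct, Finset.sum_mul, Finset.mul_sum, transpose_apply]
  rw [Finset.sum_comm]
  exact Finset.sum_congr rfl fun a _ => Finset.sum_congr rfl fun b _ => by ring

private lemma trace_vecMulVec' {m : ℕ} (u : Fin m → ℝ) : trace (vecMulVec u u) = u ⬝ᵥ u := by
  simp [trace, vecMulVec_apply, dotProduct, diag]

/-- Adding a rank-one observation strictly decreases the trace of the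
posterior predictive covariance. -/
theorem trace_strict_decrease {N p : ℕ} (D : Matrix (Fin p) (Fin p) ℝ)
    (hD : D.PosDef) (A : Matrix (Fin N) (Fin p) ℝ)
    (σ2 : ℝ) (hσ2 : 0 < σ2) (i : Fin N)
    (w : Fin p → ℝ) (hw : w = Aᵀ *ᵥ Pi.single i 1) (hw0 : w ≠ 0) :
    0 < trace (A * D⁻¹ * Aᵀ) -
        trace (A * (D + (σ2)⁻¹ • vecMulVec w w)⁻¹ * Aᵀ) := by
  set c : ℝ := σ2⁻¹ with hcdef
  have hc : 0 < c := inv_pos.mpr hσ2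
  have hDinv : (D⁻¹).PosDef := hD.inv
  set W : Matrix (Fin p) (Fin p) ℝ := vecMulVec w w with hWdef
  set s : ℝ := w ⬝ᵥ D⁻¹ *ᵥ w with hsdef
  have hs : 0 < s := by
    have := hDinv.dotProduct_mulVec_pos hw0
    simpa [hsdef] using this
  have hden : 0 < 1 + c * s := by positivity
  set k : ℝ := c / (1 + c * s) with hkdef
  have hk : 0 < k := div_pos hc hden
  have hck : k + c * k * s = c := by
    rw [hkdef]
    field_simp [hkdef]
  have hDD : D * D⁻¹ = 1 := mul_nonsing_inv D ((isUnit_iff_isUnit_det D).1 hD.isUnit)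
  set X : Matrix (Fin p) (Fin p) ℝ := D⁻¹ * W * D⁻¹ with hXdef
  set Y : Matrix (Fin p) (Fin p) ℝ := W * D⁻¹ with hYdef
  have key : W * D⁻¹ * W = s • W := sandwich' w D⁻¹
  have e1 : D * X = Y := by
    rw [hXdef]
    simp only [← Matrix.mul_assoc]
    rw [hDD, Matrix.one_mul]
  have e2 : W * X = s • Y := by
    rw [hXdef]
    simp only [← Matrix.mul_assoc]
    rw [key, Matrix.smul_mul]
  have hMinv : (D + c • W)⁻¹ = D⁻¹ - k • X := by
    apply inv_eq_right_inv
    have expand : (D + c • W) * (D⁻¹ - k • X)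
        = 1 + (c - (k + c * k * s)) • Y := by
      rw [mul_sub, add_mul, add_mul, hDD, smul_mul_assoc, mul_smul_comm, e1,
        smul_mul_assoc, mul_smul_comm, e2, smul_smul, smul_smul, hYdef, sub_smul, add_smul]
      abel
    rw [expand, hck, sub_self, zero_smul, add_zero]
  rw [hMinv]
  have hDsym : D⁻¹ᵀ = D⁻¹ := by
    have := hDinv.1
    simpa [Matrix.IsHermitian] using this
  set u : Fin N → ℝ := A *ᵥ (D⁻¹ *ᵥ w) with hudef
  have hAX : A * X * Aᵀ = vecMulVec u u := by
    rw [hXdef, hWdef]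
    simp only [← Matrix.mul_assoc]
    rw [mul_vecMulVec', Matrix.mul_assoc, vecMulVec_mul', hudef]
    rw [transpose_mul, transpose_transpose, hDsym, ← mulVec_mulVec]
  have hexp : A * (D⁻¹ - k • X) * Aᵀ = A * D⁻¹ * Aᵀ - k • vecMulVec u u := by
    rw [Matrix.mul_sub, Matrix.sub_mul, Matrix.mul_smul, Matrix.smul_mul, hAX]
  rw [hexp, trace_sub, trace_smul, trace_vecMulVec']
  have hwj : ∀ j, w j = A i j := by
    intro j
    rw [hw]
    simp [mulVec, dotProduct, Pi.single_apply]
  have hui : u i = s := by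
    rw [hudef, hsdef]
    simp only [mulVec, dotProduct]
    exact Finset.sum_congr rfl fun j _ => by rw [hwj j]
  have huu : 0 < u ⬝ᵥ u := by
    have hle : u i * u i ≤ u ⬝ᵥ u := by
      rw [dotProduct]
      exact Finset.single_le_sum (fun j _ => mul_self_nonneg (u j)) (Finset.mem_univ i)
    have : 0 < u i * u i := by rw [hui]; positivity
    linarith
  have : 0 < k * (u ⬝ᵥ u) := mul_pos hk huu
  simp only [smul_eq_mul]
  linarith
end

section
/- For the set function f(J) = tr(Σ_y) - tr(σ² I_N + A ((1/σ²) Aᵀ P_J A + Γ^{-1})^{-1} Aᵀ) defined on subsets J of {1,…,N}, if every row of A is nonzero then f is strictly monotone increasing: J ⊂ J' (strict inclusion) implies f(J) < f(J'). -/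
open Matrix

namespace ObjectiveAux

variable {N p : ℕ}

lemma mul_vecMulVec {m n q : ℕ} (X : Matrix (Fin m) (Fin n) ℝ) (u : Fin n → ℝ)
    (w : Fin q → ℝ) : X * vecMulVec u w = vecMulVec (X *ᵥ u) w := by
  ext i j
  simp only [mul_apply, vecMulVec_apply, mulVec, dotProduct, Finset.sum_mul]
  exact Finset.sum_congr rfl fun k _ => by ring

lemma vecMulVec_mul {m n q : ℕ} (u : Fin m → ℝ) (w : Fin n → ℝ)
    (X : Matrix (Fin n) (Fin q) ℝ) : vecMulVec u w * X = vecMulVec u (w ᵥ* X) := by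
  ext i j
  simp only [mul_apply, vecMulVec_apply, vecMul, dotProduct, Finset.mul_sum]
  exact Finset.sum_congr rfl fun k _ => by ring

lemma trace_vecMulVec {n : ℕ} (u w : Fin n → ℝ) :
    trace (vecMulVec u w) = u ⬝ᵥ w := by
  simp [trace, Matrix.diag, vecMulVec_apply, dotProduct]

lemma vecMulVec_mulVec {n : ℕ} (u w x : Fin n → ℝ) :
    vecMulVec u w *ᵥ x = (w ⬝ᵥ x) • u := by
  ext i
  simp only [mulVec, vecMulVec_apply, dotProduct, Pi.smul_apply, smul_eq_mul, Finset.sum_mul]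
  exact Finset.sum_congr rfl fun k _ => by ring

lemma vecMul_vecMulVec {n : ℕ} (x u w : Fin n → ℝ) :
    x ᵥ* vecMulVec u w = (x ⬝ᵥ u) • w := by
  ext j
  simp only [vecMul, vecMulVec_apply, dotProduct, Pi.smul_apply, smul_eq_mul, Finset.sum_mul]
  exact Finset.sum_congr rfl fun k _ => by ring

lemma vecMulVec_smul_right {n : ℕ} (u : Fin n → ℝ) (r : ℝ) (w : Fin n → ℝ) :
    vecMulVec u (r • w) = r • vecMulVec u w := by
  ext i j
  simp [vecMulVec_apply, mul_comm, mul_left_comm]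

lemma posSemidef_vecMulVec {n : ℕ} (v : Fin n → ℝ) : (vecMulVec v v).PosSemidef := by
  refine posSemidef_iff_dotProduct_mulVec.mpr ⟨?_, ?_⟩
  · ext i j
    simp [conjTranspose_apply, vecMulVec_apply, mul_comm]
  · intro x
    rw [vecMulVec_mulVec]
    have : star x ⬝ᵥ ((v ⬝ᵥ x) • v) = (v ⬝ᵥ x) * (v ⬝ᵥ x) := by
      simp [dotProduct_smul, star_trivial, dotProduct_comm]
    rw [this]
    exact mul_self_nonneg _

lemma posSemidef_smul {n : ℕ} {M : Matrix (Fin n) (Fin n) ℝ} (hM : M.PosSemidef)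
    {c : ℝ} (hc : 0 ≤ c) : (c • M).PosSemidef := by
  refine posSemidef_iff_dotProduct_mulVec.mpr ⟨?_, ?_⟩
  · have h := hM.1
    ext i j
    simp only [conjTranspose_apply, Matrix.smul_apply, star_trivial, smul_eq_mul]
    have := congrFun (congrFun h i) j
    simp only [conjTranspose_apply, star_trivial] at this
    rw [this]
  · intro x
    rw [smul_mulVec, dotProduct_smul]
    exact smul_nonneg hc (hM.dotProduct_mulVec_nonneg x)

lemma symm_of_posDef {n : ℕ} {M : Matrix (Fin n) (Fin n) ℝ} (hM : M.IsHermitian) :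
    Mᵀ = M := by
  ext i j
  have := congrFun (congrFun hM i) j
  simpa [conjTranspose_apply] using this

/-- The key strict step: adding a rank-one term `c • v vᵀ` (with `v = A i ≠ 0`)
strictly decreases `tr (A M⁻¹ Aᵀ)`. -/
lemma trace_step {N p : ℕ} (A : Matrix (Fin N) (Fin p) ℝ) (i : Fin N) (hv : A i ≠ 0)
    {M : Matrix (Fin p) (Fin p) ℝ} (hM : M.PosDef) {c : ℝ} (hc : 0 < c) :
    trace (A * (M + c • vecMulVec (A i) (A i))⁻¹ * Aᵀ) < trace (A * M⁻¹ * Aᵀ) := by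
  set v : Fin p → ℝ := A i with hvdef
  have hMinv : M⁻¹.PosDef := hM.inv
  have hMdet : IsUnit M.det := hM.det_pos.ne'.isUnit
  set u : Fin p → ℝ := M⁻¹ *ᵥ v with hu
  have hγ : 0 < v ⬝ᵥ u := by
    have := hMinv.dotProduct_mulVec_pos hv
    simpa [star_trivial, hu] using this
  set γ : ℝ := v ⬝ᵥ u with hγdef
  have h1γ : 0 < 1 + c * γ := by positivity
  set k : ℝ := c / (1 + c * γ) with hk
  have hkpos : 0 < k := div_pos hc h1γ
  set Nm : Matrix (Fin p) (Fin p) ℝ := M + c • vecMulVec v v with hNm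
  have hN : Nm.PosDef := hM.add_posSemidef (posSemidef_smul (posSemidef_vecMulVec v) hc.le)
  -- the transpose of M⁻¹ is itself
  have hMs : (M⁻¹)ᵀ = M⁻¹ := symm_of_posDef hMinv.1
  have hvMul : v ᵥ* M⁻¹ = u := by
    rw [← hMs, vecMul_transpose]
  have hMu : M *ᵥ u = v := by
    rw [hu, mulVec_mulVec, mul_nonsing_inv _ hMdet, one_mulVec]
  -- Sherman–Morrison
  have hSM : Nm⁻¹ = M⁻¹ - k • vecMulVec u u := by
    apply inv_eq_right_inv
    have expand : Nm * (M⁻¹ - k • vecMulVec u u) =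
        M * M⁻¹ + c • (vecMulVec v v * M⁻¹) - k • (M * vecMulVec u u)
          - (c * k) • (vecMulVec v v * vecMulVec u u) := by
      simp only [hNm, add_mul, mul_sub, smul_mul_assoc, mul_smul_comm, smul_smul,
        smul_add, smul_sub]
      abel_nf
      rw [mul_comm k c]
    rw [expand, mul_nonsing_inv _ hMdet, vecMulVec_mul v v M⁻¹, hvMul,
      mul_vecMulVec M u u, hMu, vecMulVec_mul v v (vecMulVec u u),
      vecMul_vecMulVec, ← hγdef, vecMulVec_smul_right, smul_smul]
    have hscal : c • vecMulVec v u - k • vecMulVec v u - (c * k * γ) • vecMulVec v u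
        = (0 : Matrix (Fin p) (Fin p) ℝ) := by
      rw [← sub_smul, ← sub_smul]
      have : c - k - c * k * γ = 0 := by
        rw [hk]
        field_simp
        ring
      rw [this, zero_smul]
    have : (1 : Matrix (Fin p) (Fin p) ℝ) + c • vecMulVec v u - k • vecMulVec v u
        - (c * k * γ) • vecMulVec v u
        = 1 + (c • vecMulVec v u - k • vecMulVec v u - (c * k * γ) • vecMulVec v u) := by
      abel
    rw [this, hscal, add_zero]
  -- compute the trace difference
  set w : Fin N → ℝ := A *ᵥ u with hw
  have houter : A * vecMulVec u u * Aᵀ = vecMulVec w w := by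
    rw [mul_vecMulVec, vecMulVec_mul, vecMul_transpose]
  have htr : trace (A * Nm⁻¹ * Aᵀ) = trace (A * M⁻¹ * Aᵀ) - k * (w ⬝ᵥ w) := by
    rw [hSM, Matrix.mul_sub, Matrix.sub_mul, Matrix.mul_smul, Matrix.smul_mul, houter, trace_sub,
      trace_smul, trace_vecMulVec, smul_eq_mul]
  have hwi : w i = γ := by
    simp only [hw, mulVec, hγdef, ← hvdef]
  have hwne : w ≠ 0 := by
    intro h
    rw [h] at hwi
    exact absurd hwi.symm (ne_of_gt hγ)
  have hww : 0 < w ⬝ᵥ w := by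
    have := (dotProduct_star_self_pos_iff (v := w)).mpr hwne
    simpa [star_trivial] using this
  rw [htr]
  have : 0 < k * (w ⬝ᵥ w) := mul_pos hkpos hww
  linarith

end ObjectiveAux

/-- The set function `f(J) = tr(Σ_y) - tr(Σ_post^{(J)})` is strictly monotone
increasing when every row of `A` is nonzero. -/
theorem objective_strict_mono {N p : ℕ}
    (A : Matrix (Fin N) (Fin p) ℝ) (hA : ∀ i : Fin N, A i ≠ 0)
    (d : Fin p → ℝ) (hd : ∀ i, 0 < d i)
    (σ2 : ℝ) (hσ2 : 0 < σ2)
    (PJ : Finset (Fin N) → Matrix (Fin N) (Fin N) ℝ)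
    (hPJ : ∀ J, PJ J = diagonal (fun j => if j ∈ J then (1 : ℝ) else 0))
    (f : Finset (Fin N) → ℝ)
    (hf : ∀ J, f J =
      trace (σ2 • (1 : Matrix (Fin N) (Fin N) ℝ) + A * diagonal d * Aᵀ) -
      trace (σ2 • (1 : Matrix (Fin N) (Fin N) ℝ) +
        A * ((σ2)⁻¹ • (Aᵀ * PJ J * A) + (diagonal d)⁻¹)⁻¹ * Aᵀ)) :
    ∀ J J' : Finset (Fin N), J ⊂ J' → f J < f J' := by
  classical
  open ObjectiveAux in
  -- abbreviations
  set Mm : Finset (Fin N) → Matrix (Fin p) (Fin p) ℝ :=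
    fun J => (σ2)⁻¹ • (Aᵀ * PJ J * A) + (diagonal d)⁻¹ with hMm
  set g : Finset (Fin N) → ℝ := fun J => trace (A * (Mm J)⁻¹ * Aᵀ) with hg
  have hdiagPD : ((diagonal d)⁻¹ : Matrix (Fin p) (Fin p) ℝ).PosDef :=
    (Matrix.posDef_diagonal_iff.mpr hd).inv
  have hAT : (A : Matrix (Fin N) (Fin p) ℝ)ᴴ = Aᵀ := by
    ext i j; simp [conjTranspose_apply]
  have hPDM : ∀ J, (Mm J).PosDef := by
    intro J
    have hP : (PJ J).PosSemidef := by
      rw [hPJ]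
      exact Matrix.PosSemidef.diagonal (by intro j; dsimp; split <;> norm_num)
    have h1 : (Aᵀ * PJ J * A).PosSemidef := by
      have := hP.conjTranspose_mul_mul_same A
      rwa [hAT] at this
    exact Matrix.PosDef.posSemidef_add
      (ObjectiveAux.posSemidef_smul h1 (inv_nonneg.mpr hσ2.le)) hdiagPD
  -- the insert identity
  have hins : ∀ (J : Finset (Fin N)) (i : Fin N), i ∉ J →
      Mm (insert i J) = Mm J + (σ2)⁻¹ • vecMulVec (A i) (A i) := by
    intro J i hi
    have key : ∀ (S : Finset (Fin N)) (j k : Fin p),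
        (Aᵀ * diagonal (fun l => if l ∈ S then (1 : ℝ) else 0) * A) j k
          = ∑ l ∈ S, A l j * A l k := by
      intro S j k
      rw [Matrix.mul_apply]
      simp only [Matrix.mul_diagonal, transpose_apply, mul_ite, ite_mul,
        mul_one, mul_zero, zero_mul]
      rw [Finset.sum_ite_mem, Finset.univ_inter]
    have hrel : Aᵀ * PJ (insert i J) * A = Aᵀ * PJ J * A + vecMulVec (A i) (A i) := by
      rw [hPJ, hPJ]
      ext j k
      rw [Matrix.add_apply, key (insert i J) j k, key J j k, Finset.sum_insert hi,
        vecMulVec_apply]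
      exact add_comm _ _
    rw [hMm]
    dsimp only
    rw [hrel, smul_add]
    abel
  -- strict single step
  have hstep : ∀ (J : Finset (Fin N)) (i : Fin N), i ∉ J → g (insert i J) < g J := by
    intro J i hi
    have := ObjectiveAux.trace_step A i (hA i) (hPDM J) (inv_pos.mpr hσ2)
    rw [hg]
    dsimp only
    rw [hins J i hi]
    exact this
  -- monotone over unions
  have hmono : ∀ (s J : Finset (Fin N)), Disjoint s J → s.Nonempty → g (J ∪ s) < g J := by
    intro s
    induction s using Finset.induction_on with
    | empty => intro J _ hne; exact absurd rfl hne.ne_empty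
    | insert a t hat ih =>
      intro J hdisj _
      have haJ : a ∉ J := by
        have := Finset.disjoint_left.mp hdisj (Finset.mem_insert_self a t)
        exact this
      by_cases ht : t.Nonempty
      · have hdt : Disjoint t J :=
          hdisj.mono_left (Finset.subset_insert a t)
        have h1 : g (J ∪ t) < g J := ih J hdt ht
        have ha' : a ∉ J ∪ t := by
          simp only [Finset.mem_union]
          push_neg
          exact ⟨haJ, hat⟩
        have h2 : g (J ∪ insert a t) < g (J ∪ t) := by
          rw [Finset.union_insert]
          exact hstep _ a ha'
        exact lt_trans h2 h1
      · rw [Finset.not_nonempty_iff_eq_empty] at ht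
        subst ht
        rw [Finset.union_insert, Finset.union_empty]
        exact hstep J a haJ
  intro J J' hss
  have hsub : J ⊆ J' := hss.subset
  have hne : (J' \ J).Nonempty := by
    rw [Finset.sdiff_nonempty]
    exact fun h => hss.not_subset h
  have hdisj : Disjoint (J' \ J) J := Finset.sdiff_disjoint
  have hkey : g J' < g J := by
    have := hmono (J' \ J) J hdisj hne
    rwa [Finset.union_sdiff_of_subset hsub] at this
  rw [hf J, hf J']
  have hta : ∀ K : Finset (Fin N),
      trace (σ2 • (1 : Matrix (Fin N) (Fin N) ℝ) + A * (Mm K)⁻¹ * Aᵀ)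
        = trace (σ2 • (1 : Matrix (Fin N) (Fin N) ℝ)) + g K := by
    intro K
    rw [trace_add, hg]
  rw [hMm] at hta
  rw [hta J, hta J']
  linarith
end

section
/- Let A be an N×p real matrix with every row nonzero, Γ diagonal positive definite p×p, σ² > 0, and for J ⊆ {1,…,N} let g(J) = tr(A ((1/σ²) Aᵀ P_J A + Γ^{-1})^{-1} Aᵀ). Then for i ∉ J, g(J) - g(J ∪ {i}) = (1/σ²)·‖A D_J^{-1} w_i‖² / (1 + (1/σ²)·w_iᵀ D_J^{-1} w_i), where D_J = (1/σ²) Aᵀ P_J A + Γ^{-1} and w_i = Aᵀ e_i. In particular the marginal decrease depends only on A, Γ, σ², J, i and not on any observed data. -/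
open Matrix

/-- The marginal decrease in the trace of the posterior predictive covariance
when labeling image `i` has the closed form
`(1/σ²)‖A D_J⁻¹ wᵢ‖² / (1 + (1/σ²) wᵢᵀ D_J⁻¹ wᵢ)` and depends only on
`A, Γ, σ², J, i` (not on any observed data). -/
theorem marginal_trace_decrease {N p : ℕ}
    (A : Matrix (Fin N) (Fin p) ℝ) (hA : ∀ i : Fin N, A i ≠ 0)
    (d : Fin p → ℝ) (hd : ∀ i, 0 < d i)
    (σ2 : ℝ) (hσ2 : 0 < σ2)
    (D : Finset (Fin N) → Matrix (Fin p) (Fin p) ℝ)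
    (hD : ∀ J, D J =
      (σ2)⁻¹ • (Aᵀ * diagonal (fun j => if j ∈ J then (1 : ℝ) else 0) * A)
        + (diagonal d)⁻¹)
    (g : Finset (Fin N) → ℝ)
    (hg : ∀ J, g J = trace (A * (D J)⁻¹ * Aᵀ))
    (J : Finset (Fin N)) (i : Fin N) (hi : i ∉ J)
    (w : Fin p → ℝ) (hw : w = Aᵀ *ᵥ Pi.single i 1) :
    g J - g (insert i J) =
      (σ2)⁻¹ * ((A *ᵥ ((D J)⁻¹ *ᵥ w)) ⬝ᵥ (A *ᵥ ((D J)⁻¹ *ᵥ w))) /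
        (1 + (σ2)⁻¹ * (w ⬝ᵥ ((D J)⁻¹ *ᵥ w))) := by
  have hσ2' : σ2 ≠ 0 := hσ2.ne'
  -- w is row i of A
  have hw' : w = A i := by
    rw [hw]; ext j; simp [mulVec_single]
  have hw0 : w ≠ 0 := hw' ▸ hA i
  -- positive definiteness of D J for any J
  have hDpos : ∀ K : Finset (Fin N), (D K).PosDef := by
    intro K
    rw [hD K]
    have h2 : ((diagonal d)⁻¹).PosDef := (Matrix.posDef_diagonal_iff.mpr hd).inv
    have h1 : ((σ2)⁻¹ • (Aᵀ * diagonal (fun j => if j ∈ K then (1:ℝ) else 0) * A)).PosSemidef := by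
      set Q : Matrix (Fin N) (Fin N) ℝ :=
        diagonal (fun n => Real.sqrt (if n ∈ K then σ2⁻¹ else 0)) with hQ
      have hfun : (fun n => Real.sqrt (if n ∈ K then σ2⁻¹ else 0) *
          Real.sqrt (if n ∈ K then σ2⁻¹ else 0)) = fun n => σ2⁻¹ * (if n ∈ K then (1:ℝ) else 0) := by
        funext n
        by_cases h : n ∈ K <;>
          simp [h, ← mul_inv, Real.mul_self_sqrt hσ2.le]
      have hdiag : diagonal (fun n => σ2⁻¹ * (if n ∈ K then (1:ℝ) else 0))
          = σ2⁻¹ • diagonal (fun n => if n ∈ K then (1:ℝ) else 0) := by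
        ext j k
        by_cases h : j = k <;> simp [Matrix.diagonal_apply, h]
      have key : (σ2)⁻¹ • (Aᵀ * diagonal (fun j => if j ∈ K then (1:ℝ) else 0) * A)
          = (Q * A)ᵀ * (Q * A) := by
        simp only [transpose_mul, hQ, diagonal_transpose, Matrix.mul_assoc]
        rw [← Matrix.mul_assoc (diagonal _) (diagonal _) A, diagonal_mul_diagonal, hfun, hdiag,
          Matrix.smul_mul, Matrix.mul_smul]
      rw [key]
      have := Matrix.posSemidef_conjTranspose_mul_self (Q * A)
      simpa using this
    exact Matrix.PosDef.posSemidef_add h1 h2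
  set B := (D J)⁻¹ with hB
  have hDJ : (D J).PosDef := hDpos J
  have hBpos : B.PosDef := hDJ.inv
  have hBsym : Bᵀ = B := by
    have := hBpos.isHermitian
    rwa [Matrix.IsHermitian, conjTranspose_eq_transpose_of_trivial] at this
  set q : ℝ := w ⬝ᵥ (B *ᵥ w) with hq
  have hqpos : 0 < q := by
    have := hBpos.dotProduct_mulVec_pos hw0
    simpa [star_trivial, hq] using this
  have hden : (0:ℝ) < σ2 + q := by linarith
  set v : Fin N → ℝ := A *ᵥ (B *ᵥ w) with hv
  -- the rank-one update matrices
  set U : Matrix (Fin p) Unit ℝ := replicateCol Unit w with hU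
  set V : Matrix Unit (Fin p) ℝ := replicateRow Unit w with hV
  set C : Matrix Unit Unit ℝ := diagonal (fun _ => σ2⁻¹) with hC
  have hCinv : C⁻¹ = diagonal (fun _ => σ2) := by
    apply Matrix.inv_eq_right_inv
    rw [hC, diagonal_mul_diagonal]
    simp [inv_mul_cancel₀ hσ2']
  -- D (insert i J) = D J + U * C * V
  have hsplit : D (insert i J) = D J + U * C * V := by
    rw [hD, hD]
    have h1 : (fun j => if j ∈ insert i J then (1:ℝ) else 0)
        = fun j => (if j ∈ J then (1:ℝ) else 0) + (Pi.single i (1:ℝ) : Fin N → ℝ) j := by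
      funext j
      rcases eq_or_ne j i with rfl | hj
      · simp [hi]
      · simp [hj, Finset.mem_insert, Pi.single_apply]
    have h2 : U * C * V = σ2⁻¹ • (Aᵀ * diagonal (Pi.single i (1:ℝ) : Fin N → ℝ) * A) := by
      ext j k
      simp only [hU, hV, hC, Matrix.mul_apply, Matrix.smul_apply, replicateCol_apply, replicateRow_apply,
        diagonal_apply, transpose_apply, Fintype.sum_unique, smul_eq_mul, Pi.single_apply,
        mul_ite, ite_mul, zero_mul, mul_zero, mul_one, Finset.sum_ite_eq, Finset.sum_ite_eq',
        Finset.mem_univ, if_true, hw']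
      ring
    rw [h2, h1]
    have h3 : diagonal (fun j => (if j ∈ J then (1:ℝ) else 0) + (Pi.single i (1:ℝ) : Fin N → ℝ) j)
        = diagonal (fun j => if j ∈ J then (1:ℝ) else 0) + diagonal (Pi.single i (1:ℝ) : Fin N → ℝ) :=
      (diagonal_add _ _).symm
    rw [h3, Matrix.mul_add, Matrix.add_mul, smul_add]
    abel
  have hAunit : IsUnit (D J) := hDJ.isUnit
  have hCunit : IsUnit C := by
    rw [Matrix.isUnit_iff_isUnit_det, hC, det_diagonal]
    simp [isUnit_iff_ne_zero, hσ2']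
  have hMdiag : C⁻¹ + V * (D J)⁻¹ * U = diagonal (fun _ : Unit => σ2 + q) := by
    rw [hCinv]
    have hVBU : V * (D J)⁻¹ * U = diagonal (fun _ : Unit => q) := by
      ext a b
      rw [hV, hU, ← hB, ← replicateRow_vecMul, replicateRow_mul_replicateCol_apply]
      rw [hq, dotProduct_mulVec]
      simp [diagonal_apply]
    rw [hVBU, diagonal_add]
  have hMunit : IsUnit (C⁻¹ + V * (D J)⁻¹ * U) := by
    rw [hMdiag, Matrix.isUnit_iff_isUnit_det, det_diagonal]
    simp [isUnit_iff_ne_zero, hden.ne']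
  have hMinv : (C⁻¹ + V * (D J)⁻¹ * U)⁻¹ = diagonal (fun _ : Unit => (σ2 + q)⁻¹) := by
    rw [hMdiag]
    apply Matrix.inv_eq_right_inv
    rw [diagonal_mul_diagonal]
    simp [mul_inv_cancel₀ hden.ne']
  have hwood : (D (insert i J))⁻¹
      = B - B * U * diagonal (fun _ : Unit => (σ2 + q)⁻¹) * V * B := by
    rw [hsplit, Matrix.add_mul_mul_inv_eq_sub (D J) U C V hAunit hCunit hMunit, hMinv, ← hB]
  -- reduce to the trace of the rank-one correction
  have hT : A * (B * U * diagonal (fun _ : Unit => (σ2 + q)⁻¹) * V * B) * Aᵀ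
      = (σ2 + q)⁻¹ • (replicateCol Unit v * replicateRow Unit v) := by
    have e1 : A * (B * U * diagonal (fun _ : Unit => (σ2 + q)⁻¹) * V * B) * Aᵀ
        = (A * B * U) * diagonal (fun _ : Unit => (σ2 + q)⁻¹) * (V * B * Aᵀ) := by
      simp only [Matrix.mul_assoc]
    have e2 : A * B * U = replicateCol Unit v := by
      rw [hU, ← replicateCol_mulVec, hv, mulVec_mulVec]
    have e3 : V * B * Aᵀ = replicateRow Unit v := by
      rw [hV, ← replicateRow_vecMul, ← replicateRow_vecMul]
      have : w ᵥ* B = B *ᵥ w := by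
        conv_lhs => rw [← hBsym]
        rw [vecMul_transpose]
      rw [this, vecMul_transpose, hv]
    rw [e1, e2, e3, ← smul_one_eq_diagonal, Matrix.mul_smul, Matrix.mul_one, Matrix.smul_mul]
  rw [hg, hg, hwood, ← hB, Matrix.mul_sub, Matrix.sub_mul, trace_sub, sub_sub_cancel, hT,
    trace_smul, trace_replicateCol_mul_replicateRow, smul_eq_mul]
  have h1q : 0 < 1 + σ2⁻¹ * q := by
    have hinv : 0 < σ2⁻¹ := inv_pos.mpr hσ2
    nlinarith
  rw [eq_div_iff h1q.ne']
  field_simp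
end
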